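/- The equilibrium ((−1+√5)/2, 0) of the unforced oscillator is Lyapunov stable: for every ε > 0 there exists δ > 0 such that for all differentiable x, v : ℝ → ℝ satisfying x'(t) = v(t), v'(t) = −(1/4)v(t) + x(t) − x(t)² − x(t)³ for all t ≥ 0, if ‖(x(0), v(0)) − (x₂, 0)‖ < δ then ‖(x(t), v(t)) − (x₂, 0)‖ < ε for all t ≥ 0, where x₂ = (−1+√5)/2. -/

import Mathlib

set_option maxHeartbeats 1000000

lemma osc_taylor (x₂ a : ℝ) (h2 : x₂^2 + x₂ - 1 = 0) :
    a^4/4 + a^3/3 - a^2/2 - (x₂^4/4 + x₂^3/3 - x₂^2/2)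
      = (2-x₂)/2*(a-x₂)^2 + (x₂+1/3)*(a-x₂)^3 + (a-x₂)^4/4 := by
  linear_combination ((a-x₂)*(3*a-x₂)/2) * h2

lemma key_lower (x₂ a b : ℝ) (h2 : x₂^2 + x₂ - 1 = 0) (hlb : (0.61:ℝ) ≤ x₂) (hub : x₂ ≤ 0.62)
    (hu : |a - x₂| ≤ 1/2) (hb : |b| ≤ 1/2) :
    (1/5) * max |a - x₂| |b| ^ 2 ≤ b^2/2 + (a^4/4 + a^3/3 - a^2/2) - (x₂^4/4 + x₂^3/3 - x₂^2/2) := by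
  have hu' := abs_le.mp hu
  have hb' := abs_le.mp hb
  set u := a - x₂ with hudef
  have hW := osc_taylor x₂ a h2
  have hc1 : 0 ≤ (x₂+1/3)*((1/2 - u)*u^2) :=
    mul_nonneg (by linarith) (mul_nonneg (by linarith) (sq_nonneg u))
  have hc2 : 0 ≤ (x₂+1/3)*((1/2 + u)*u^2) :=
    mul_nonneg (by linarith) (mul_nonneg (by linarith) (sq_nonneg u))
  have hc3 : 0 ≤ (0.62 - x₂)*u^2 := mul_nonneg (by linarith) (sq_nonneg u)
  rcases max_cases |a - x₂| |b| with ⟨hm, _⟩ | ⟨hm, _⟩ <;> rw [hm, sq_abs] <;>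
    nlinarith [sq_nonneg b, sq_nonneg u, sq_nonneg (u^2)]

lemma key_upper (x₂ a b δ : ℝ) (h2 : x₂^2 + x₂ - 1 = 0) (hlb : (0.61:ℝ) ≤ x₂) (hub : x₂ ≤ 0.62)
    (hd : δ ≤ 1/2) (hu : |a - x₂| ≤ δ) (hb : |b| ≤ δ) :
    b^2/2 + (a^4/4 + a^3/3 - a^2/2) - (x₂^4/4 + x₂^3/3 - x₂^2/2) ≤ 2 * δ^2 := by
  have hu' := abs_le.mp hu
  have hb' := abs_le.mp hb
  have h0 : 0 ≤ δ := le_trans (abs_nonneg b) hb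
  set u := a - x₂ with hudef
  have hW := osc_taylor x₂ a h2
  have hu2 : u^2 ≤ δ^2 := sq_le_sq' hu'.1 hu'.2
  have hb2 : b^2 ≤ δ^2 := sq_le_sq' hb'.1 hb'.2
  have hc1 : 0 ≤ (x₂+1/3)*((δ - u)*u^2) :=
    mul_nonneg (by linarith) (mul_nonneg (by linarith) (sq_nonneg u))
  have h5 : (x₂+1/3)*δ*u^2 ≤ 0.48*u^2 :=
    mul_le_mul_of_nonneg_right (by nlinarith) (sq_nonneg u)
  have h6 : 0 ≤ (x₂ - 0.61)*u^2 := mul_nonneg (by linarith) (sq_nonneg u)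
  have h7 : u^2*u^2 ≤ (1/4)*u^2 :=
    mul_le_mul_of_nonneg_right (le_trans hu2 (by nlinarith)) (sq_nonneg u)
  nlinarith [sq_nonneg u, sq_nonneg δ, hu2, hb2, hc1, h5, h6, h7]

/-- Lyapunov stability of the equilibrium `((-1+√5)/2, 0)` of the unforced
oscillator `ẋ = v, v̇ = -(1/4)v + x - x² - x³`. -/
theorem stmt_15 :
    let x₂ : ℝ := (-1 + Real.sqrt 5) / 2
    ∀ ε > 0, ∃ δ > 0, ∀ x v : ℝ → ℝ,
      Differentiable ℝ x → Differentiable ℝ v →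
      (∀ t ≥ (0 : ℝ), deriv x t = v t ∧
        deriv v t = -(1/4 : ℝ) * v t + x t - (x t) ^ 2 - (x t) ^ 3) →
      ‖((x 0, v 0) : ℝ × ℝ) - (x₂, 0)‖ < δ →
      ∀ t ≥ (0 : ℝ), ‖((x t, v t) : ℝ × ℝ) - (x₂, 0)‖ < ε := by
  intro x₂ ε hε
  have hx2 : x₂ = (-1 + Real.sqrt 5) / 2 := rfl
  have h5 : Real.sqrt 5 ^ 2 = 5 := Real.sq_sqrt (by norm_num)
  have hn : (0:ℝ) ≤ Real.sqrt 5 := Real.sqrt_nonneg 5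
  have h2 : x₂^2 + x₂ - 1 = 0 := by rw [hx2]; nlinarith
  have hlb : (0.61:ℝ) ≤ x₂ := by rw [hx2]; nlinarith
  have hub : x₂ ≤ 0.62 := by rw [hx2]; nlinarith
  set ε' : ℝ := min ε (1/2) with hε'def
  have hε'pos : 0 < ε' := lt_min hε (by norm_num)
  have hε'le : ε' ≤ 1/2 := min_le_right _ _
  refine ⟨ε'/4, by positivity, ?_⟩
  intro x v hx hv hode h0 t ht
  -- norm formula
  have hnorm : ∀ s : ℝ, ‖((x s, v s) : ℝ × ℝ) - (x₂, 0)‖ = max |x s - x₂| |v s| := by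
    intro s
    simp [Prod.norm_def, Real.norm_eq_abs]
  -- energy
  set E : ℝ → ℝ := fun s => (v s)^2/2 + (x s)^4/4 + (x s)^3/3 - (x s)^2/2 with hEdef
  have hEd : ∀ s ∈ Set.Ici (0:ℝ), HasDerivAt E (-(v s)^2/4) s := by
    intro s hs
    have hode' := hode s hs
    have hxd : HasDerivAt x (v s) s := hode'.1 ▸ (hx s).hasDerivAt
    have hvd : HasDerivAt v (-(1/4 : ℝ) * v s + x s - (x s)^2 - (x s)^3) s :=
      hode'.2 ▸ (hv s).hasDerivAt
    have h := ((((hvd.pow 2).div_const 2).add ((hxd.pow 4).div_const 4)).add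
      ((hxd.pow 3).div_const 3)).sub ((hxd.pow 2).div_const 2)
    convert h using 1
    · rfl
    · rfl
    · rfl
    push_cast
    ring
  have hEc : Continuous E := by
    have hxc := hx.continuous
    have hvc := hv.continuous
    fun_prop
  have hmono : AntitoneOn E (Set.Ici 0) := by
    apply antitoneOn_of_deriv_nonpos (convex_Ici 0) hEc.continuousOn
    · intro s hs
      rw [interior_Ici] at hs
      exact (hEd s (Set.mem_Ici.mpr (le_of_lt hs))).differentiableAt.differentiableWithinAt
    · intro s hs
      rw [interior_Ici] at hs
      rw [(hEd s (Set.mem_Ici.mpr (le_of_lt hs))).deriv]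
      nlinarith [sq_nonneg (v s)]
  -- reduce to ε'
  have key : ‖((x t, v t) : ℝ × ℝ) - (x₂, 0)‖ < ε' := by
    by_contra hcon
    push_neg at hcon
    have hg : Continuous fun s => ‖((x s, v s) : ℝ × ℝ) - (x₂, 0)‖ := by
      have hxc := hx.continuous
      have hvc := hv.continuous
      fun_prop
    have h0' : ‖((x 0, v 0) : ℝ × ℝ) - (x₂, 0)‖ ≤ ε' := le_of_lt (lt_of_lt_of_le h0 (by linarith))
    obtain ⟨t', ht'mem, ht'⟩ :=
      intermediate_value_Icc ht hg.continuousOn (Set.mem_Icc.mpr ⟨h0', hcon⟩)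
    simp only [hnorm] at ht'
    have hau : |x t' - x₂| ≤ ε' := ht' ▸ le_max_left _ _
    have hab : |v t'| ≤ ε' := ht' ▸ le_max_right _ _
    have hlow := key_lower x₂ (x t') (v t') h2 hlb hub (le_trans hau hε'le) (le_trans hab hε'le)
    rw [ht'] at hlow
    -- initial energy bound
    rw [hnorm 0] at h0
    have hu0 : |x 0 - x₂| ≤ ε'/4 := le_of_lt (lt_of_le_of_lt (le_max_left _ _) h0)
    have hb0 : |v 0| ≤ ε'/4 := le_of_lt (lt_of_le_of_lt (le_max_right _ _) h0)
    have hup := key_upper x₂ (x 0) (v 0) (ε'/4) h2 hlb hub (by linarith) hu0 hb0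
    have hEle : E t' ≤ E 0 :=
      hmono (Set.self_mem_Ici) (Set.mem_Ici.mpr ht'mem.1) ht'mem.1
    simp only [hEdef] at hEle
    nlinarith [hε'pos]
  exact lt_of_lt_of_le key (min_le_left _ _)
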